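/- Let G be a connected finite simple graph on n vertices with smallest independence-polynomial root β := β(G). Then for every integer k with 1 ≤ k ≤ n, the higher derivatives of I(G,z) at β satisfy |I^{(k+1)}(G, β)| ≤ k!·|I'(G, β)|·(n/β^{dia(G)})^k. In other words, Smale's gamma-function of the polynomial I'(G,z) at β is at most n/β^{dia(G)}. -/

import Mathlib

open Polynomial

open scoped Classical in
/-- `indPolyOn G A` is the independence polynomial (over `ℝ`) of the subgraph of `G`
induced on the vertex set `A`: the sum of `(-1)^|s| • X^|s|` over all independent
sets `s ⊆ A` of `G`.  Equivalently it is `∑ k (-1)^k a_k z^k` where `a_k` is the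
number of independent sets of size `k` of the induced subgraph `G[A]`. -/
noncomputable def indPolyOn {V : Type*} [Fintype V] (G : SimpleGraph V) (A : Set V) :
    Polynomial ℝ :=
  ∑ s ∈ Finset.univ.filter
      (fun s : Finset V => ↑s ⊆ A ∧ ∀ u ∈ s, ∀ v ∈ s, ¬ G.Adj u v),
    ((-1 : ℝ) ^ s.card) • (X : Polynomial ℝ) ^ s.card

/-- The independence polynomial `I(G,z)` of `G`. -/
noncomputable def indPoly {V : Type*} [Fintype V] (G : SimpleGraph V) : Polynomial ℝ :=
  indPolyOn G Set.univ

namespace IndAux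

open Finset

open scoped Classical

variable {V : Type*} [Fintype V] (G : SimpleGraph V)

/-- The independent subsets of `A`. -/
noncomputable def indS (A : Finset V) : Finset (Finset V) :=
  Finset.univ.filter (fun s : Finset V => s ⊆ A ∧ ∀ u ∈ s, ∀ v ∈ s, ¬ G.Adj u v)

lemma mem_indS {A s : Finset V} :
    s ∈ indS G A ↔ s ⊆ A ∧ ∀ u ∈ s, ∀ v ∈ s, ¬ G.Adj u v := by
  simp [indS]

lemma indPolyOn_eq (A : Finset V) :
    indPolyOn G ↑A = ∑ s ∈ indS G A, ((-1 : ℝ) ^ s.card) • (X : Polynomial ℝ) ^ s.card := by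
  unfold indPolyOn indS
  congr 1
  ext s
  simp

lemma recursion {A : Finset V} {v : V} (hv : v ∉ A) :
    indPolyOn G ↑(insert v A) =
      indPolyOn G ↑A - X * indPolyOn G ↑(A.filter (fun x => ¬ G.Adj v x)) := by
  rw [indPolyOn_eq, indPolyOn_eq, indPolyOn_eq,
    ← Finset.sum_filter_add_sum_filter_not (indS G (insert v A)) (fun s => v ∈ s)]
  have h1 : (indS G (insert v A)).filter (fun s => v ∉ s) = indS G A := by
    ext s
    simp only [Finset.mem_filter, mem_indS]
    constructor
    · rintro ⟨⟨hsub, hind⟩, hvs⟩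
      refine ⟨fun x hx => ?_, hind⟩
      rcases Finset.mem_insert.1 (hsub hx) with h | h
      · exact absurd (h ▸ hx) hvs
      · exact h
    · rintro ⟨hsub, hind⟩
      exact ⟨⟨hsub.trans (Finset.subset_insert _ _), hind⟩, fun hvs => hv (hsub hvs)⟩
  have h2 : ∑ s ∈ (indS G (insert v A)).filter (fun s => v ∈ s),
        ((-1 : ℝ) ^ s.card) • (X : Polynomial ℝ) ^ s.card =
      -(X * ∑ s ∈ indS G (A.filter (fun x => ¬ G.Adj v x)),
        ((-1 : ℝ) ^ s.card) • (X : Polynomial ℝ) ^ s.card) := by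
    rw [Finset.mul_sum, ← Finset.sum_neg_distrib]
    refine Finset.sum_nbij' (fun s => s.erase v) (fun s => insert v s) ?_ ?_ ?_ ?_ ?_
    · intro s hs
      simp only [Finset.mem_filter, mem_indS] at hs
      obtain ⟨⟨hsub, hind⟩, hvs⟩ := hs
      rw [mem_indS]
      constructor
      · intro x hx
        have hxs := Finset.mem_of_mem_erase hx
        have hxv := Finset.ne_of_mem_erase hx
        rcases Finset.mem_insert.1 (hsub hxs) with h | h
        · exact absurd h hxv
        · exact Finset.mem_filter.2 ⟨h, fun hadj => hind v hvs x hxs hadj⟩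
      · exact fun u hu w hw => hind u (Finset.mem_of_mem_erase hu) w (Finset.mem_of_mem_erase hw)
    · intro s hs
      rw [mem_indS] at hs
      obtain ⟨hsub, hind⟩ := hs
      have hvns : v ∉ s := fun h => hv (Finset.mem_filter.1 (hsub h)).1
      simp only [Finset.mem_filter, mem_indS]
      refine ⟨⟨?_, ?_⟩, Finset.mem_insert_self _ _⟩
      · intro x hx
        rcases Finset.mem_insert.1 hx with h | h
        · exact h ▸ Finset.mem_insert_self _ _
        · exact Finset.mem_insert_of_mem (Finset.mem_filter.1 (hsub h)).1
      · intro u hu w hw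
        rcases Finset.mem_insert.1 hu with hu' | hu' <;> rcases Finset.mem_insert.1 hw with hw' | hw'
        · subst hu'; subst hw'; exact G.irrefl
        · subst hu'; exact (Finset.mem_filter.1 (hsub hw')).2
        · subst hw'; intro hadj; exact (Finset.mem_filter.1 (hsub hu')).2 hadj.symm
        · exact hind u hu' w hw'
    · intro s hs
      simp only [Finset.mem_filter] at hs
      exact Finset.insert_erase hs.2
    · intro s hs
      rw [mem_indS] at hs
      have hvns : v ∉ s := fun h => hv (Finset.mem_filter.1 (hs.1 h)).1
      exact Finset.erase_insert hvns
    · intro s hs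
      simp only [Finset.mem_filter, mem_indS] at hs
      obtain ⟨⟨hsub, hind⟩, hvs⟩ := hs
      have hpos : 0 < s.card := Finset.card_pos.2 ⟨v, hvs⟩
      have hcard : s.card = (s.erase v).card + 1 := by
        rw [Finset.card_erase_of_mem hvs]
        omega
      rw [hcard]
      simp only [pow_succ, smul_eq_C_mul, map_mul, map_neg, map_one]
      ring
  rw [h1, h2]
  ring

end IndAux

namespace Chunk2
open Finset
open scoped Classical
variable {V : Type*} [Fintype V] (G : SimpleGraph V)
open IndAux

lemma eval_indPolyOn (A : Finset V) (x : ℝ) :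
    (indPolyOn G ↑A).eval x = ∑ s ∈ indS G A, (-1 : ℝ) ^ s.card * x ^ s.card := by
  rw [indPolyOn_eq]
  simp [eval_finset_sum]

lemma empty_mem_indS (A : Finset V) : ∅ ∈ indS G A := by
  simp [mem_indS]

lemma eval_pos_of_nonpos {x : ℝ} (hx : x ≤ 0) (A : Finset V) :
    0 < (indPolyOn G ↑A).eval x := by
  rw [eval_indPolyOn]
  have h1 : ((-1 : ℝ)) ^ (∅ : Finset V).card * x ^ (∅ : Finset V).card = 1 := by simp
  calc (0 : ℝ) < 1 := one_pos
    _ = (-1 : ℝ) ^ (∅ : Finset V).card * x ^ (∅ : Finset V).card := h1.symm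
    _ ≤ ∑ s ∈ indS G A, (-1 : ℝ) ^ s.card * x ^ s.card := by
        refine Finset.single_le_sum (f := fun s : Finset V => (-1:ℝ)^s.card * x^s.card)
          (fun s _ => ?_) (empty_mem_indS G A)
        rw [← neg_pow]
        exact pow_nonneg (by linarith) _

lemma indPoly_eq : indPoly G = indPolyOn G ↑(Finset.univ : Finset V) := by
  rw [indPoly, Finset.coe_univ]

lemma eval_insert_le {x : ℝ} (hx : 0 ≤ x)
    (h0 : ∀ C : Finset V, 0 ≤ (indPolyOn G ↑C).eval x) {B : Finset V} {v : V} (hv : v ∉ B) :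
    (indPolyOn G ↑(insert v B)).eval x ≤ (indPolyOn G ↑B).eval x := by
  rw [recursion G hv]
  simp only [eval_sub, eval_mul, eval_X]
  have := h0 (B.filter (fun y => ¬ G.Adj v y))
  nlinarith

lemma eval_le_of_subset {x : ℝ} (hx : 0 ≤ x)
    (h0 : ∀ C : Finset V, 0 ≤ (indPolyOn G ↑C).eval x) {A B : Finset V} (hBA : B ⊆ A) :
    (indPolyOn G ↑A).eval x ≤ (indPolyOn G ↑B).eval x := by
  have key : ∀ C : Finset V, (indPolyOn G ↑(B ∪ C)).eval x ≤ (indPolyOn G ↑B).eval x := by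
    intro C
    induction C using Finset.induction with
    | empty => simp
    | @insert w C hw ih =>
      by_cases hwBC : w ∈ B ∪ C
      · rw [Finset.union_insert, Finset.insert_eq, Finset.union_eq_right.2 (by simpa using hwBC)]
        exact ih
      · rw [Finset.union_insert]
        exact (eval_insert_le G hx h0 hwBC).trans ih
  have := key (A \ B)
  rwa [Finset.union_sdiff_of_subset hBA] at this

end Chunk2

namespace Chunk3
open Finset
open scoped Classical
variable {V : Type*} [Fintype V] (G : SimpleGraph V)
open IndAux Chunk2

lemma eval_nonneg_all {β : ℝ} (hroot : (indPoly G).eval β = 0)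
    (hmin : ∀ x : ℝ, (indPoly G).eval x = 0 → β ≤ x) :
    ∀ x : ℝ, 0 ≤ x → x ≤ β → ∀ A : Finset V, 0 ≤ (indPolyOn G ↑A).eval x := by
  by_contra hcon
  push_neg at hcon
  obtain ⟨x0, hx00, hx0β, A0, hA0⟩ := hcon
  set bad : Set ℝ := {x | 0 ≤ x ∧ x ≤ β ∧ ∃ A : Finset V, (indPolyOn G ↑A).eval x < 0} with hbadset
  have hx0bad : x0 ∈ bad := ⟨hx00, hx0β, A0, hA0⟩
  have hne : bad.Nonempty := ⟨x0, hx0bad⟩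
  have hbdd : BddBelow bad := ⟨0, fun y hy => hy.1⟩
  set m := sInf bad with hm
  have hm0 : 0 ≤ m := le_csInf hne fun y hy => hy.1
  have hmβ : m ≤ β := le_trans (csInf_le hbdd hx0bad) hx0β
  -- Step A : all evaluations at m are nonnegative
  have stepA : ∀ A : Finset V, 0 ≤ (indPolyOn G ↑A).eval m := by
    intro A
    by_contra hA
    push_neg at hA
    have hmpos : 0 < m := by
      rcases hm0.lt_or_eq with h | h
      · exact h
      · exfalso
        rw [← h] at hA
        exact absurd hA (not_lt.2 (eval_pos_of_nonpos G le_rfl A).le)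
    have hopen : IsOpen {y : ℝ | (indPolyOn G ↑A).eval y < 0} :=
      isOpen_lt (Polynomial.continuous _) continuous_const
    obtain ⟨ε, hε, hball⟩ := Metric.isOpen_iff.1 hopen m hA
    set y := max (m / 2) (m - ε / 2) with hy
    have hym : y < m := max_lt (by linarith) (by linarith)
    have hyball : y ∈ Metric.ball m ε := by
      rw [Metric.mem_ball, Real.dist_eq, abs_lt]
      constructor
      · have : m - ε / 2 ≤ y := le_max_right _ _
        linarith
      · linarith
    have hybad : y ∈ bad := by
      refine ⟨le_trans (by linarith) (le_max_left _ _), le_trans hym.le hmβ, A, hball hyball⟩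
    exact absurd (csInf_le hbdd hybad) (not_le.2 hym)
  -- Step B : some evaluation at m is zero
  have huno : (Finset.univ : Finset (Finset V)).Nonempty := Finset.univ_nonempty
  set g : ℝ → ℝ := fun x =>
    Finset.univ.inf' huno (fun A : Finset V => (indPolyOn G ↑A).eval x) with hg
  have hgm0 : 0 ≤ g m := Finset.le_inf' _ _ fun A _ => stepA A
  have hgcont : Continuous g := by
    refine continuous_iff_continuousAt.2 fun z => ?_
    exact ContinuousAt.finset_inf'_apply huno
      (fun A _ => (Polynomial.continuous _).continuousAt)
  have hgm : g m = 0 := by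
    rcases hgm0.lt_or_eq with hpos | h
    · exfalso
      have hopen : IsOpen {y : ℝ | 0 < g y} := isOpen_lt continuous_const hgcont
      obtain ⟨ε, hε, hball⟩ := Metric.isOpen_iff.1 hopen m hpos
      obtain ⟨x, hxbad, hxlt⟩ := (csInf_lt_iff hbdd hne).1 (lt_add_of_pos_right m hε)
      have hxm : m ≤ x := csInf_le hbdd hxbad
      have hxball : x ∈ Metric.ball m ε := by
        rw [Metric.mem_ball, Real.dist_eq, abs_lt]
        constructor <;> linarith
      have hgx : 0 < g x := hball hxball
      obtain ⟨A, hA⟩ := hxbad.2.2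
      have : g x ≤ (indPolyOn G ↑A).eval x := Finset.inf'_le _ (Finset.mem_univ A)
      linarith
    · exact h.symm
  obtain ⟨A, -, hAeq⟩ := Finset.exists_mem_eq_inf' huno
    (fun A : Finset V => (indPolyOn G ↑A).eval m)
  have hAzero : (indPolyOn G ↑A).eval m = 0 := by rw [← hAeq]; exact hgm
  -- monotonicity : the full polynomial is ≤ 0 at m
  have huniv : (indPoly G).eval m ≤ 0 := by
    rw [indPoly_eq]
    exact le_trans (eval_le_of_subset G hm0 stepA (Finset.subset_univ A)) (le_of_eq hAzero)
  -- intermediate value : there is a root in [0, m], so β ≤ m, hence m = β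
  have hβm : β ≤ m := by
    have hcont : ContinuousOn (fun x => (indPoly G).eval x) (Set.Icc 0 m) :=
      (Polynomial.continuous _).continuousOn
    have h0pos : 0 < (indPoly G).eval 0 := by
      rw [indPoly_eq]; exact eval_pos_of_nonpos G le_rfl _
    have hmem : (0 : ℝ) ∈ Set.Icc ((indPoly G).eval m) ((indPoly G).eval 0) :=
      ⟨huniv, h0pos.le⟩
    obtain ⟨c, hc, hceq⟩ := intermediate_value_Icc' hm0 hcont hmem
    exact le_trans (hmin c hceq) hc.2
  have hmeq : m = β := le_antisymm hmβ hβm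
  have hx0m : x0 = m := le_antisymm (hmeq ▸ hx0β) (csInf_le hbdd hx0bad)
  rw [hx0m] at hA0
  exact absurd hA0 (not_lt.2 (stepA A0))

end Chunk3

namespace Chunk4
open Finset
open scoped Classical
variable {V : Type*} [Fintype V] {G : SimpleGraph V} {β : ℝ}
open IndAux Chunk2

/-- star lemma -/
lemma star_lemma (hβ0 : 0 ≤ β) (hnn : ∀ A : Finset V, 0 ≤ (indPolyOn G ↑A).eval β)
    {A : Finset V} {v : V} (hv : v ∉ A) :
    β * (indPolyOn G ↑(A.filter (fun x => ¬ G.Adj v x))).eval β ≤ (indPolyOn G ↑A).eval β := by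
  have hrec := congrArg (Polynomial.eval β) (recursion G hv)
  simp only [eval_sub, eval_mul, eval_X] at hrec
  have h1 := hnn (insert v A)
  linarith [hrec ▸ h1]

/-- the walk lemma (Lemma D) -/
lemma walk_bound (hβ0 : 0 < β) (hβ1 : β ≤ 1)
    (hnn : ∀ A : Finset V, 0 ≤ (indPolyOn G ↑A).eval β) :
    ∀ (l : ℕ) (A : Finset V) (w z : V), z ∉ A → w ∈ A →
      ∀ p : G.Walk w z, p.length ≤ l →
      β ^ l * (indPolyOn G ↑(A.erase w)).eval β ≤ (indPolyOn G ↑A).eval β := by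
  intro l
  induction l with
  | zero =>
    intro A w z hz hw p hp
    have : w = z := p.eq_of_length_eq_zero (Nat.le_zero.1 hp)
    exact absurd (this ▸ hw) hz
  | succ l ih =>
    intro A w z hz hw p hp
    cases p with
    | nil => exact absurd hw hz
    | @cons _ y _ hadj q =>
      have hpowle : β ^ (l + 1) ≤ β := by
        calc β ^ (l + 1) = β ^ l * β := by ring
        _ ≤ 1 * β := by
            apply mul_le_mul_of_nonneg_right _ hβ0.le
            exact pow_le_one₀ hβ0.le hβ1
        _ = β := one_mul β
      by_cases hyA : y ∈ A
      · -- y ∈ A : use recursion at y and induction hypothesis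
        have hyw : y ≠ w := fun h => G.irrefl (h ▸ hadj)
        have hins : insert y (A.erase y) = A := Finset.insert_erase hyA
        have hy' : y ∉ A.erase y := Finset.notMem_erase _ _
        have hrec := congrArg (Polynomial.eval β) (recursion G hy')
        rw [hins] at hrec
        simp only [eval_sub, eval_mul, eval_X] at hrec
        -- hrec : eval β (P A) = eval β (P (A.erase y)) - β * eval β (P F)
        have hihy : β ^ l * (indPolyOn G ↑(A.erase y)).eval β ≤ (indPolyOn G ↑A).eval β :=
          ih A y z hz hyA q (by simpa using Nat.succ_le_succ_iff.1 hp)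
        have hsub : (A.erase y).filter (fun x => ¬ G.Adj y x) ⊆ A.erase w := by
          intro x hx
          rw [Finset.mem_filter] at hx
          refine Finset.mem_erase.2 ⟨fun h => hx.2 (h ▸ hadj.symm), Finset.mem_of_mem_erase hx.1⟩
        have hmono := eval_le_of_subset G hβ0.le hnn hsub
        have h1 := hnn A
        have h2 := hnn (A.erase w)
        have h3 := hnn ((A.erase y).filter (fun x => ¬ G.Adj y x))
        have hβl0 : (0:ℝ) ≤ β ^ l := pow_nonneg hβ0.le l
        have hβl1 : β ^ l ≤ 1 := pow_le_one₀ hβ0.le hβ1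
        -- β^(l+1) * P(A.erase w) ≤ β^l * (β * P F) = β^l * (P(A.erase y) - P A)
        calc β ^ (l + 1) * (indPolyOn G ↑(A.erase w)).eval β
            = β ^ l * (β * (indPolyOn G ↑(A.erase w)).eval β) := by ring
          _ ≤ β ^ l * (β * (indPolyOn G ↑((A.erase y).filter (fun x => ¬ G.Adj y x))).eval β) := by
              apply mul_le_mul_of_nonneg_left _ hβl0
              exact mul_le_mul_of_nonneg_left hmono hβ0.le
          _ = β ^ l * (indPolyOn G ↑(A.erase y)).eval β - β ^ l * (indPolyOn G ↑A).eval β := by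
              rw [show β * (indPolyOn G ↑((A.erase y).filter (fun x => ¬ G.Adj y x))).eval β
                  = (indPolyOn G ↑(A.erase y)).eval β - (indPolyOn G ↑A).eval β by linarith [hrec]]
              ring
          _ ≤ (indPolyOn G ↑A).eval β := by nlinarith
      · -- y ∉ A : use the star lemma at y
        have hstar := star_lemma hβ0.le hnn hyA
        have hsub : A.filter (fun x => ¬ G.Adj y x) ⊆ A.erase w := by
          intro x hx
          rw [Finset.mem_filter] at hx
          exact Finset.mem_erase.2 ⟨fun h => hx.2 (h ▸ hadj.symm), hx.1⟩
        have hmono := eval_le_of_subset G hβ0.le hnn hsub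
        have h2 := hnn (A.erase w)
        calc β ^ (l + 1) * (indPolyOn G ↑(A.erase w)).eval β
            ≤ β * (indPolyOn G ↑(A.erase w)).eval β :=
              mul_le_mul_of_nonneg_right hpowle h2
          _ ≤ β * (indPolyOn G ↑(A.filter (fun x => ¬ G.Adj y x))).eval β :=
              mul_le_mul_of_nonneg_left hmono hβ0.le
          _ ≤ (indPolyOn G ↑A).eval β := hstar

end Chunk4

namespace Chunk5
open Finset
open scoped Classical
variable {V : Type*} [Fintype V]
open IndAux Chunk2 Chunk4

/-- complement of the closed neighbourhood of a set -/
noncomputable def compN (G : SimpleGraph V) (T : Finset V) : Finset V :=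
  Finset.univ.filter (fun x => ∀ t ∈ T, x ≠ t ∧ ¬ G.Adj t x)

lemma mem_compN {G : SimpleGraph V} {T : Finset V} {x : V} :
    x ∈ compN G T ↔ ∀ t ∈ T, x ≠ t ∧ ¬ G.Adj t x := by
  simp [compN]

lemma compN_insert {G : SimpleGraph V} (T : Finset V) (w : V) :
    compN G (insert w T) = ((compN G T).erase w).filter (fun x => ¬ G.Adj w x) := by
  ext x
  simp only [mem_compN, Finset.mem_filter, Finset.mem_erase]
  constructor
  · intro h
    have hw := h w (Finset.mem_insert_self _ _)
    exact ⟨⟨hw.1, fun t ht => h t (Finset.mem_insert_of_mem ht)⟩, hw.2⟩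
  · rintro ⟨⟨hxw, h⟩, hadj⟩ t ht
    rcases Finset.mem_insert.1 ht with rfl | ht
    · exact ⟨hxw, hadj⟩
    · exact h t ht

variable {G : SimpleGraph V} {β : ℝ}

lemma ediam_ne_top (hG : G.Connected) : G.ediam ≠ ⊤ := by
  have : Nonempty V := hG.nonempty
  obtain ⟨u, v, huv⟩ := SimpleGraph.exists_edist_eq_ediam_of_finite (G := G)
  rw [← huv]
  exact SimpleGraph.edist_ne_top_iff_reachable.2 (hG u v)

/-- one-vertex step : removing the closed neighbourhood of an extra vertex costs at
most a factor `β ^ diam`. -/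
lemma step_one (hG : G.Connected) (hβ0 : 0 < β) (hβ1 : β ≤ 1)
    (hnn : ∀ A : Finset V, 0 ≤ (indPolyOn G ↑A).eval β)
    {T : Finset V} {u w : V} (hu : u ∈ T) (hw : w ∈ compN G T) :
    β ^ G.diam * (indPolyOn G ↑(compN G (insert w T))).eval β ≤
      (indPolyOn G ↑(compN G T)).eval β := by
  set A := compN G T with hA
  have hwT := mem_compN.1 hw u hu
  have hwu : w ≠ u := hwT.1
  set d := G.dist u w with hd
  have hd1 : 1 ≤ d := (hG.pos_dist_of_ne (Ne.symm hwu))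
  have hdD : d ≤ G.diam := SimpleGraph.dist_le_diam (ediam_ne_top hG)
  obtain ⟨p, hplen⟩ := hG.exists_walk_length_eq_dist u w
  have hD1 : 1 ≤ G.diam := le_trans hd1 hdD
  cases p with
  | nil => exact absurd rfl (Ne.symm hwu)
  | @cons _ y _ hadj q =>
    -- hadj : G.Adj u y, q : G.Walk y w ; use the reversed walk from w to y
    have hyA : y ∉ A := by
      intro hy
      exact (mem_compN.1 hy u hu).2 hadj
    have hqlen : q.reverse.length ≤ G.diam - 1 := by
      rw [SimpleGraph.Walk.length_reverse]
      have : q.length + 1 = d := by simpa using hplen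
      omega
    have hwalk := walk_bound hβ0 hβ1 hnn (G.diam - 1) A w y hyA hw q.reverse hqlen
    -- star step
    have hvnotin : w ∉ A.erase w := Finset.notMem_erase _ _
    have hstar := star_lemma hβ0.le hnn hvnotin
    rw [← compN_insert] at hstar
    have h1 := hnn (compN G (insert w T))
    calc β ^ G.diam * (indPolyOn G ↑(compN G (insert w T))).eval β
        = β ^ (G.diam - 1) * (β * (indPolyOn G ↑(compN G (insert w T))).eval β) := by
          rw [← mul_assoc, ← pow_succ]
          congr 2
          omega
      _ ≤ β ^ (G.diam - 1) * (indPolyOn G ↑(A.erase w)).eval β := by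
          apply mul_le_mul_of_nonneg_left hstar (pow_nonneg hβ0.le _)
      _ ≤ (indPolyOn G ↑A).eval β := hwalk

/-- Claim C : iterated step. -/
lemma claimC (hG : G.Connected) (hβ0 : 0 < β) (hβ1 : β ≤ 1)
    (hnn : ∀ A : Finset V, 0 ≤ (indPolyOn G ↑A).eval β) :
    ∀ (S : Finset V) (u : V), u ∉ S →
      (∀ a ∈ insert u S, ∀ b ∈ insert u S, ¬ G.Adj a b) →
      β ^ (G.diam * S.card) * (indPolyOn G ↑(compN G (insert u S))).eval β ≤
        (indPolyOn G ↑(compN G {u})).eval β := by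
  intro S
  induction S using Finset.induction with
  | empty =>
    intro u _ _
    simp
  | @insert w S hwS ih =>
    intro u huS hind
    have huS' : u ∉ S := fun h => huS (Finset.mem_insert_of_mem h)
    have huw : u ≠ w := fun h => huS (h ▸ Finset.mem_insert_self _ _)
    have hindsub : ∀ a ∈ insert u S, ∀ b ∈ insert u S, ¬ G.Adj a b := by
      intro a ha b hb
      have hsub : insert u S ⊆ insert u (insert w S) := by
        intro x hx
        rcases Finset.mem_insert.1 hx with rfl | hx
        · exact Finset.mem_insert_self _ _
        · exact Finset.mem_insert_of_mem (Finset.mem_insert_of_mem hx)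
      exact hind a (hsub ha) b (hsub hb)
    have hw : w ∈ compN G (insert u S) := by
      rw [mem_compN]
      intro t ht
      have htm : t ∈ insert u (insert w S) := by
        rcases Finset.mem_insert.1 ht with rfl | ht
        · exact Finset.mem_insert_self _ _
        · exact Finset.mem_insert_of_mem (Finset.mem_insert_of_mem ht)
      have hwm : w ∈ insert u (insert w S) :=
        Finset.mem_insert_of_mem (Finset.mem_insert_self _ _)
      refine ⟨fun h => ?_, fun h => hind t htm w hwm h⟩
      subst h
      rcases Finset.mem_insert.1 ht with h | h
      · exact huw h.symm
      · exact hwS h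
    have hstep := step_one hG hβ0 hβ1 hnn (Finset.mem_insert_self u S) hw
    have hih := ih u huS' hindsub
    have hcomm : insert u (insert w S) = insert w (insert u S) := Finset.insert_comm u w S
    have hcard : (insert w S).card = S.card + 1 := Finset.card_insert_of_notMem hwS
    have hβD : (0:ℝ) ≤ β ^ (G.diam * S.card) := pow_nonneg hβ0.le _
    calc β ^ (G.diam * (insert w S).card) *
          (indPolyOn G ↑(compN G (insert u (insert w S)))).eval β
        = β ^ (G.diam * S.card) *
            (β ^ G.diam * (indPolyOn G ↑(compN G (insert w (insert u S)))).eval β) := by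
          rw [hcomm, hcard, show G.diam * (S.card+1) = G.diam * S.card + G.diam by ring,
            pow_add]
          ring
      _ ≤ β ^ (G.diam * S.card) * (indPolyOn G ↑(compN G (insert u S))).eval β :=
          mul_le_mul_of_nonneg_left hstep hβD
      _ ≤ (indPolyOn G ↑(compN G {u})).eval β := hih

end Chunk5

namespace Chunk6
open Finset
open scoped Classical
variable {V : Type*} [Fintype V] (G : SimpleGraph V)
open IndAux Chunk2 Chunk5

/-- independent sets of size `m` -/
noncomputable def indC (m : ℕ) : Finset (Finset V) :=
  Finset.univ.filter (fun T : Finset V => T.card = m ∧ ∀ u ∈ T, ∀ v ∈ T, ¬ G.Adj u v)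

lemma mem_indC {m : ℕ} {T : Finset V} :
    T ∈ indC G m ↔ T.card = m ∧ ∀ u ∈ T, ∀ v ∈ T, ¬ G.Adj u v := by
  simp [indC]

lemma deriv_eval (m : ℕ) (β : ℝ) :
    (Polynomial.derivative^[m] (indPoly G)).eval β =
      (-1 : ℝ) ^ m * m.factorial *
        ∑ T ∈ indC G m, (indPolyOn G ↑(compN G T)).eval β := by
  have h1 : Polynomial.derivative^[m] (indPoly G) =
      ∑ s ∈ indS G Finset.univ,
        ((-1 : ℝ) ^ s.card) • ((s.card.descFactorial m : ℝ) • (X : Polynomial ℝ) ^ (s.card - m)) := by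
    rw [indPoly_eq, indPolyOn_eq, Polynomial.iterate_derivative_sum]
    refine Finset.sum_congr rfl fun s _ => ?_
    rw [Polynomial.iterate_derivative_smul, Polynomial.iterate_derivative_X_pow_eq_smul]
  rw [h1]
  rw [Polynomial.eval_finset_sum]
  have h2 : ∀ s ∈ indS G Finset.univ,
      (((-1 : ℝ) ^ s.card) • ((s.card.descFactorial m : ℝ) • (X : Polynomial ℝ) ^ (s.card - m))).eval β
        = ∑ T ∈ s.powersetCard m, (-1 : ℝ) ^ s.card * m.factorial * β ^ (s.card - m) := by
    intro s _
    rw [Finset.sum_const, Finset.card_powersetCard]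
    simp only [Polynomial.eval_smul, smul_eq_mul, Polynomial.eval_pow, Polynomial.eval_X,
      nsmul_eq_mul]
    rw [Nat.descFactorial_eq_factorial_mul_choose]
    push_cast
    ring
  rw [Finset.sum_congr rfl h2]
  rw [Finset.sum_comm' (t' := indC G m)
    (s' := fun T => (indS G Finset.univ).filter (fun s => T ⊆ s)) ?memiff]
  case memiff =>
    intro s T
    simp only [Finset.mem_filter, mem_indS, Finset.mem_powersetCard, mem_indC]
    constructor
    · rintro ⟨⟨hsub, hind⟩, hTs, hTcard⟩
      exact ⟨⟨⟨hsub, hind⟩, hTs⟩, hTcard, fun u hu v hv => hind u (hTs hu) v (hTs hv)⟩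
    · rintro ⟨⟨⟨hsub, hind⟩, hTs⟩, hTcard, -⟩
      exact ⟨⟨hsub, hind⟩, hTs, hTcard⟩
  rw [Finset.mul_sum]
  refine Finset.sum_congr rfl fun T hT => ?_
  rw [mem_indC] at hT
  obtain ⟨hTcard, hTind⟩ := hT
  rw [eval_indPolyOn]
  rw [Finset.mul_sum]
  refine Finset.sum_nbij' (fun s => s \ T) (fun s' => s' ∪ T) ?_ ?_ ?_ ?_ ?_
  · -- forward membership
    intro s hs
    simp only [Finset.mem_filter, mem_indS] at hs
    obtain ⟨⟨-, hind⟩, hTs⟩ := hs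
    rw [mem_indS]
    constructor
    · intro x hx
      obtain ⟨hxs, hxT⟩ := Finset.mem_sdiff.1 hx
      rw [mem_compN]
      exact fun t ht => ⟨fun h => hxT (h ▸ ht), fun hadj => hind t (hTs ht) x hxs hadj⟩
    · intro u hu v hv
      exact hind u (Finset.mem_sdiff.1 hu).1 v (Finset.mem_sdiff.1 hv).1
  · -- backward membership
    intro s' hs'
    rw [mem_indS] at hs'
    obtain ⟨hsub, hind⟩ := hs'
    simp only [Finset.mem_filter, mem_indS]
    refine ⟨⟨Finset.subset_univ _, ?_⟩, Finset.subset_union_right⟩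
    intro u hu v hv
    rcases Finset.mem_union.1 hu with hu' | hu' <;> rcases Finset.mem_union.1 hv with hv' | hv'
    · exact hind u hu' v hv'
    · intro hadj
      exact (mem_compN.1 (hsub hu') v hv').2 hadj.symm
    · exact (mem_compN.1 (hsub hv') u hu').2
    · exact hTind u hu' v hv'
  · intro s hs
    simp only [Finset.mem_filter, mem_indS] at hs
    exact Finset.sdiff_union_of_subset hs.2
  · intro s' hs'
    rw [mem_indS] at hs'
    refine Finset.union_sdiff_cancel_right ?_
    rw [Finset.disjoint_right]
    intro t ht hts'
    exact (mem_compN.1 (hs'.1 hts') t ht).1 rfl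
  · intro s hs
    simp only [Finset.mem_filter, mem_indS] at hs
    obtain ⟨⟨-, hind⟩, hTs⟩ := hs
    have hcard : s.card = (s \ T).card + m := by
      rw [Finset.card_sdiff_of_subset hTs]
      have := Finset.card_le_card hTs
      omega
    rw [hcard]
    rw [Nat.add_sub_cancel, pow_add]
    ring
end Chunk6

namespace Chunk7
open Finset
open scoped Classical
variable {V : Type*} [Fintype V] {G : SimpleGraph V} {β : ℝ}
open IndAux Chunk2 Chunk3 Chunk4 Chunk5 Chunk6

lemma eval_singleton (v : V) (x : ℝ) :
    (indPolyOn G ↑({v} : Finset V)).eval x = 1 - x := by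
  have hsing : indS G {v} = {∅, {v}} := by
    ext s
    rw [mem_indS]
    simp only [Finset.subset_singleton_iff, Finset.mem_insert, Finset.mem_singleton]
    constructor
    · rintro ⟨h, -⟩; exact h
    · rintro (rfl | rfl)
      · simp
      · refine ⟨Or.inr rfl, ?_⟩
        intro u hu w hw
        rw [Finset.mem_singleton] at hu hw
        subst hu; subst hw
        exact G.irrefl
  rw [eval_indPolyOn, hsing,
    Finset.sum_pair (Ne.symm (Finset.singleton_ne_empty v))]
  simp
  ring

lemma sum_singletons (f : Finset V → ℝ) :
    ∑ T ∈ indC G 1, f T = ∑ u : V, f {u} := by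
  refine (Finset.sum_bij (fun (u : V) (_ : u ∈ Finset.univ) => ({u} : Finset V))
    ?_ ?_ ?_ ?_).symm
  · intro u _
    rw [mem_indC]
    refine ⟨Finset.card_singleton u, ?_⟩
    intro a ha b hb
    rw [Finset.mem_singleton] at ha hb
    subst ha; subst hb
    exact G.irrefl
  · intro a _ b _ h
    exact Finset.singleton_injective h
  · intro T hT
    rw [mem_indC] at hT
    obtain ⟨u, rfl⟩ := Finset.card_eq_one.1 hT.1
    exact ⟨u, Finset.mem_univ u, rfl⟩
  · intro u _
    rfl

end Chunk7


open IndAux Chunk2 Chunk3 Chunk4 Chunk5 Chunk6 Chunk7 in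
open scoped Classical in
/-- For a connected graph `G` on `n` vertices with smallest
independence-polynomial root `β := β(G)` and every `1 ≤ k ≤ n`,
`|I^{(k+1)}(G,β)| ≤ k!·|I'(G,β)|·(n/β^{dia(G)})^k`; i.e. Smale's gamma-function of
`I'(G,z)` at `β` is at most `n/β^{dia(G)}`. -/
theorem gamma_of_deriv_indPoly_bound {V : Type*} [Fintype V]
    (G : SimpleGraph V) (hG : G.Connected)
    (β : ℝ) (hroot : (indPoly G).eval β = 0)
    (hmin : ∀ x : ℝ, (indPoly G).eval x = 0 → β ≤ x) :
    ∀ k : ℕ, 1 ≤ k → k ≤ Fintype.card V →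
      |(derivative^[k + 1] (indPoly G)).eval β| ≤
        (k.factorial : ℝ) * |(derivative (indPoly G)).eval β| *
          ((Fintype.card V : ℝ) / β ^ G.diam) ^ k := by
  intro k hk1 hk2
  have hVne : Nonempty V := hG.nonempty
  -- positivity of β
  have hβ0 : 0 < β := by
    by_contra h
    push_neg at h
    have := eval_pos_of_nonpos G h (Finset.univ : Finset V)
    rw [← indPoly_eq] at this
    exact absurd hroot (ne_of_gt this)
  -- nonnegativity of all induced independence polynomials at β
  have hnn : ∀ A : Finset V, 0 ≤ (indPolyOn G ↑A).eval β :=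
    eval_nonneg_all G hroot hmin β hβ0.le le_rfl
  -- β ≤ 1
  have hβ1 : β ≤ 1 := by
    obtain ⟨v⟩ := hVne
    have := hnn ({v} : Finset V)
    rw [eval_singleton] at this
    linarith
  set n := Fintype.card V with hn
  set D := G.diam with hD
  set J : Finset V → ℝ := fun T => (indPolyOn G ↑(compN G T)).eval β with hJ
  have hJnn : ∀ T, 0 ≤ J T := fun T => hnn _
  set c : ℝ := β ^ (D * k) with hc
  have hcpos : 0 < c := pow_pos hβ0 _
  -- the two sums
  set Sk : ℝ := ∑ T ∈ indC G (k + 1), J T with hSk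
  set S1 : ℝ := ∑ T ∈ indC G 1, J T with hS1
  have hSknn : 0 ≤ Sk := Finset.sum_nonneg fun T _ => hJnn T
  have hS1nn : 0 ≤ S1 := Finset.sum_nonneg fun T _ => hJnn T
  -- expressions for the derivatives
  have hDk : (derivative^[k + 1] (indPoly G)).eval β =
      (-1 : ℝ) ^ (k + 1) * (k + 1).factorial * Sk := deriv_eval G (k + 1) β
  have hD1 : (derivative (indPoly G)).eval β = -S1 := by
    have := deriv_eval G 1 β
    rw [Function.iterate_one] at this
    rw [this]
    simp
    rfl
  have habsk : |(derivative^[k + 1] (indPoly G)).eval β| = ((k + 1).factorial : ℝ) * Sk := by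
    rw [hDk, abs_mul, abs_mul, abs_pow, abs_neg, abs_one, one_pow, one_mul,
      Nat.abs_cast, abs_of_nonneg hSknn]
  have habs1 : |(derivative (indPoly G)).eval β| = S1 := by
    rw [hD1, abs_neg, abs_of_nonneg hS1nn]
  -- Claim C, per term
  have hclaim : ∀ T ∈ indC G (k + 1), ∀ u ∈ T, c * J T ≤ J {u} := by
    intro T hT u hu
    rw [mem_indC] at hT
    obtain ⟨hTcard, hTind⟩ := hT
    have herase : insert u (T.erase u) = T := Finset.insert_erase hu
    have hcard : (T.erase u).card = k := by
      rw [Finset.card_erase_of_mem hu, hTcard]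
      omega
    have := claimC hG hβ0 hβ1 hnn (T.erase u) u (Finset.notMem_erase _ _)
      (by rw [herase]; exact hTind)
    rw [herase, hcard] at this
    exact this
  -- summing over u ∈ T
  have hsumT : ∀ T ∈ indC G (k + 1), c * ((k + 1) * J T) ≤ ∑ u ∈ T, J {u} := by
    intro T hT
    have hTcard : T.card = k + 1 := ((mem_indC G).1 hT).1
    calc c * ((k + 1) * J T) = ∑ _u ∈ T, c * J T := by
          rw [Finset.sum_const, hTcard, nsmul_eq_mul]
          push_cast
          ring
      _ ≤ ∑ u ∈ T, J {u} := Finset.sum_le_sum fun u hu => hclaim T hT u hu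
  -- double counting
  have hdouble : ∑ T ∈ indC G (k + 1), ∑ u ∈ T, J {u} ≤ (n : ℝ) ^ k * S1 := by
    have hswap : ∑ T ∈ indC G (k + 1), ∑ u ∈ T, J {u} =
        ∑ u : V, (((indC G (k + 1)).filter (fun T => u ∈ T)).card : ℝ) * J {u} := by
      rw [Finset.sum_comm' (t' := Finset.univ)
        (s' := fun u => (indC G (k + 1)).filter (fun T => u ∈ T))
        (fun T u => by simp only [Finset.mem_filter, Finset.mem_univ, true_and, and_comm])]
      refine Finset.sum_congr rfl fun u _ => ?_
      rw [Finset.sum_const, nsmul_eq_mul]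
    rw [hswap]
    have hcount : ∀ u : V, (((indC G (k + 1)).filter (fun T => u ∈ T)).card : ℝ) ≤ (n : ℝ) ^ k := by
      intro u
      have hle : ((indC G (k + 1)).filter (fun T => u ∈ T)).card ≤
          (Finset.powersetCard k (Finset.univ : Finset V)).card := by
        refine Finset.card_le_card_of_injOn (fun T => T.erase u) ?_ ?_
        · intro T hT
          simp only [Finset.mem_coe, Finset.mem_filter, mem_indC] at hT
          rw [Finset.mem_coe, Finset.mem_powersetCard]
          refine ⟨Finset.subset_univ _, ?_⟩
          rw [Finset.card_erase_of_mem hT.2, hT.1.1]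
          omega
        · intro T1 h1 T2 h2 h
          simp only [Finset.coe_filter, Set.mem_setOf_eq] at h1 h2
          dsimp only at h
          rw [← Finset.insert_erase h1.2, ← Finset.insert_erase h2.2, h]
      have : (Finset.powersetCard k (Finset.univ : Finset V)).card = n.choose k := by
        rw [Finset.card_powersetCard, Finset.card_univ]
      rw [this] at hle
      calc (((indC G (k + 1)).filter (fun T => u ∈ T)).card : ℝ) ≤ (n.choose k : ℝ) := by
            exact_mod_cast hle
        _ ≤ ((n ^ k : ℕ) : ℝ) := by exact_mod_cast Nat.choose_le_pow n k
        _ = (n : ℝ) ^ k := by push_cast; ring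
    calc ∑ u : V, (((indC G (k + 1)).filter (fun T => u ∈ T)).card : ℝ) * J {u}
        ≤ ∑ u : V, (n : ℝ) ^ k * J {u} :=
          Finset.sum_le_sum fun u _ => mul_le_mul_of_nonneg_right (hcount u) (hJnn _)
      _ = (n : ℝ) ^ k * S1 := by
          rw [← Finset.mul_sum, hS1, sum_singletons]
  -- main inequality
  have hmain : c * ((k + 1) * Sk) ≤ (n : ℝ) ^ k * S1 := by
    calc c * ((k + 1) * Sk) = ∑ T ∈ indC G (k + 1), c * ((k + 1) * J T) := by
          rw [hSk, Finset.mul_sum, Finset.mul_sum]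
      _ ≤ ∑ T ∈ indC G (k + 1), ∑ u ∈ T, J {u} := Finset.sum_le_sum hsumT
      _ ≤ (n : ℝ) ^ k * S1 := hdouble
  -- conclusion
  rw [habsk, habs1]
  have hfac : ((k + 1).factorial : ℝ) = (k.factorial : ℝ) * (k + 1) := by
    rw [Nat.factorial_succ]
    push_cast
    ring
  have hpow : ((n : ℝ) / β ^ D) ^ k = (n : ℝ) ^ k / c := by
    rw [div_pow, hc, ← pow_mul]
  rw [hfac, hpow]
  have hfinal : ((k:ℝ) + 1) * Sk ≤ S1 * ((n:ℝ) ^ k / c) := by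
    have hstep : ((k:ℝ) + 1) * Sk * c ≤ S1 * (n:ℝ) ^ k := by nlinarith [hmain]
    calc ((k:ℝ) + 1) * Sk = ((k:ℝ) + 1) * Sk * c / c := by field_simp
      _ ≤ S1 * (n:ℝ) ^ k / c := (div_le_div_iff_of_pos_right hcpos).2 hstep
      _ = S1 * ((n:ℝ) ^ k / c) := by ring
  calc (k.factorial : ℝ) * ((k:ℝ) + 1) * Sk
      = (k.factorial : ℝ) * (((k:ℝ) + 1) * Sk) := by ring
    _ ≤ (k.factorial : ℝ) * (S1 * ((n:ℝ) ^ k / c)) :=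
        mul_le_mul_of_nonneg_left hfinal (Nat.cast_nonneg _)
    _ = (k.factorial : ℝ) * S1 * ((n:ℝ) ^ k / c) := by ring
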